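/- Let $0<\beta\le 1$. For every integer $k$, every integer $l\ge k+2$, every locally integrable $f$, and every $x$ with $2^{k-1}<|x|\le 2^k$, the intrinsic square function satisfies $S_\beta(f\chi_{D_l})(x) \le C\,2^{-ln}\int_{D_l}|f(z)|\,dz$, where $D_l=\{2^{l-1}<|z|\le 2^l\}$ and $C$ depends only on $n$. -/

import Mathlib

open MeasureTheory Metric Set ENNReal NNReal Filter

noncomputable section

abbrev Rn (n : ℕ) := EuclideanSpace ℝ (Fin n)

/-- The dyadic annulus `D_l = {2^(l-1) < |z| ≤ 2^l}`. -/
def annulus {n : ℕ} (l : ℤ) : Set (Rn n) :=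
  {z | (2 : ℝ) ^ (l - 1) < ‖z‖ ∧ ‖z‖ ≤ (2 : ℝ) ^ l}

/-- The family `𝒞_β`: functions supported in the unit ball, with zero mean,
satisfying the `β`-Hölder condition with constant `1`. -/
def Cbeta (n : ℕ) (β : ℝ) : Set (Rn n → ℝ) :=
  {φ | (∀ x, φ x ≠ 0 → ‖x‖ ≤ 1) ∧ (∫ x, φ x) = 0 ∧
       ∀ x x', |φ x - φ x'| ≤ ‖x - x'‖ ^ β}

/-- The convolution `f * φ_t (y)` where `φ_t(y) = t⁻ⁿ φ(y/t)`. -/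
def convDil {n : ℕ} (f φ : Rn n → ℝ) (t : ℝ) (y : Rn n) : ℝ :=
  ∫ z, f z * (t ^ (-(n : ℝ)) * φ (t⁻¹ • (y - z)))

/-- The maximal function `A_β f(y,t) = sup_{φ ∈ 𝒞_β} |f * φ_t(y)|`. -/
def Abeta {n : ℕ} (β : ℝ) (f : Rn n → ℝ) (y : Rn n) (t : ℝ) : ℝ≥0∞ :=
  ⨆ (φ : Rn n → ℝ) (_ : φ ∈ Cbeta n β), ENNReal.ofReal |convDil f φ t y|

/-- The intrinsic square function `S_β`. -/
def Sbeta {n : ℕ} (β : ℝ) (f : Rn n → ℝ) (x : Rn n) : ℝ≥0∞ :=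
  (∫⁻ p : Rn n × ℝ in {p | 0 < p.2 ∧ dist x p.1 < p.2},
      (Abeta β f p.1 p.2) ^ 2 / ENNReal.ofReal (p.2 ^ ((n : ℝ) + 1))) ^ ((1 : ℝ) / 2)

/-- Any `φ ∈ 𝒞_β` is bounded by `3`. -/
lemma phi_bound {n : ℕ} (hn : 0 < n) {β : ℝ} (hβ1 : β ≤ 1) {φ : Rn n → ℝ}
    (hφ : φ ∈ Cbeta n β) (x : Rn n) : |φ x| ≤ 3 := by
  by_cases h : φ x = 0
  · simp [h]
  have hx1 : ‖x‖ ≤ 1 := hφ.1 x h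
  set e : Rn n := EuclideanSpace.single (⟨0, hn⟩ : Fin n) (1 : ℝ) with he_def
  have he : ‖e‖ = 1 := by simp [he_def]
  have h3e : ‖(3 : ℝ) • e‖ = 3 := by rw [norm_smul, he]; norm_num
  have hfar : (1 : ℝ) < ‖x + (3 : ℝ) • e‖ := by
    have h1 : ‖(3 : ℝ) • e‖ ≤ ‖x + (3 : ℝ) • e‖ + ‖x‖ := by
      calc ‖(3 : ℝ) • e‖ = ‖(x + (3 : ℝ) • e) + (-x)‖ := by congr 1; abel
        _ ≤ ‖x + (3 : ℝ) • e‖ + ‖-x‖ := norm_add_le _ _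
        _ = ‖x + (3 : ℝ) • e‖ + ‖x‖ := by rw [norm_neg]
    rw [h3e] at h1; linarith
  have hzero : φ (x + (3 : ℝ) • e) = 0 := by
    by_contra hne
    exact absurd (hφ.1 _ hne) (not_le.2 hfar)
  have := hφ.2.2 x (x + (3 : ℝ) • e)
  rw [hzero, sub_zero] at this
  have hdist : ‖x - (x + (3 : ℝ) • e)‖ = 3 := by
    rw [show x - (x + (3 : ℝ) • e) = -((3 : ℝ) • e) by abel, norm_neg, h3e]
  rw [hdist] at this
  calc |φ x| ≤ (3 : ℝ) ^ β := this
    _ ≤ (3 : ℝ) ^ (1 : ℝ) := Real.rpow_le_rpow_of_exponent_le (by norm_num) hβ1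
    _ = 3 := Real.rpow_one 3

/-- Basic bound on the dilated convolution. -/
lemma convDil_abs_le {n : ℕ} (hn : 0 < n) {β : ℝ} (hβ1 : β ≤ 1) {g : Rn n → ℝ}
    (hg : Integrable g) {φ : Rn n → ℝ} (hφ : φ ∈ Cbeta n β) {t : ℝ} (ht : 0 < t) (y : Rn n) :
    |convDil g φ t y| ≤ 3 * t ^ (-(n : ℝ)) * ∫ z, ‖g z‖ := by
  have htn : (0 : ℝ) ≤ t ^ (-(n : ℝ)) := Real.rpow_nonneg ht.le _
  have h1 : |convDil g φ t y| ≤ ∫ z, ‖g z * (t ^ (-(n : ℝ)) * φ (t⁻¹ • (y - z)))‖ := by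
    rw [← Real.norm_eq_abs]
    exact norm_integral_le_integral_norm _
  refine h1.trans ?_
  have h2 : (∫ z, ‖g z * (t ^ (-(n : ℝ)) * φ (t⁻¹ • (y - z)))‖)
      ≤ ∫ z, ‖g z‖ * (t ^ (-(n : ℝ)) * 3) := by
    refine integral_mono_of_nonneg (Filter.Eventually.of_forall fun z => norm_nonneg _)
      ((hg.norm).mul_const _) (Filter.Eventually.of_forall fun z => ?_)
    dsimp only
    rw [norm_mul]
    refine mul_le_mul_of_nonneg_left ?_ (norm_nonneg _)
    rw [norm_mul, Real.norm_eq_abs, Real.norm_eq_abs, abs_of_nonneg htn]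
    exact mul_le_mul_of_nonneg_left (phi_bound hn hβ1 hφ _) htn
  refine h2.trans ?_
  rw [integral_mul_const]
  exact le_of_eq (by ring)

/-- If `g` lives far from `y`, the convolution vanishes. -/
lemma convDil_eq_zero {n : ℕ} {β : ℝ} {g φ : Rn n → ℝ} (hφ : φ ∈ Cbeta n β)
    {t : ℝ} (ht : 0 < t) {y : Rn n} (h : ∀ z, g z ≠ 0 → t < ‖y - z‖) :
    convDil g φ t y = 0 := by
  have hz : ∀ z, g z * (t ^ (-(n : ℝ)) * φ (t⁻¹ • (y - z))) = 0 := by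
    intro z
    by_cases hgz : g z = 0
    · simp [hgz]
    · have hyz := h z hgz
      have hφ0 : φ (t⁻¹ • (y - z)) = 0 := by
        by_contra hne
        have h1 : ‖t⁻¹ • (y - z)‖ ≤ 1 := hφ.1 _ hne
        rw [norm_smul, Real.norm_eq_abs, abs_of_nonneg (inv_nonneg.2 ht.le)] at h1
        have h2 := mul_le_mul_of_nonneg_left h1 ht.le
        rw [mul_one, ← mul_assoc, mul_inv_cancel₀ ht.ne', one_mul] at h2
        linarith
      simp [hφ0]
  simp only [convDil]
  rw [integral_congr_ae (Filter.Eventually.of_forall hz)]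
  simp

set_option maxHeartbeats 2000000 in
theorem intrinsic_square_pointwise_bound_outer
    (n : ℕ) (hn : 0 < n) (β : ℝ) (hβ0 : 0 < β) (hβ1 : β ≤ 1) :
    ∃ C : ℝ, 0 < C ∧
      ∀ (k l : ℤ), k + 2 ≤ l →
      ∀ f : Rn n → ℝ, LocallyIntegrable f volume →
      ∀ x : Rn n, (2 : ℝ) ^ (k - 1) < ‖x‖ → ‖x‖ ≤ (2 : ℝ) ^ k →
        Sbeta β ((annulus l).indicator f) x
          ≤ ENNReal.ofReal C * ENNReal.ofReal ((2 : ℝ) ^ (-(l * (n : ℤ)))) *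
              ∫⁻ z in annulus (n := n) l, (‖f z‖₊ : ℝ≥0∞) := by
  classical
  haveI : Nonempty (Fin n) := ⟨⟨0, hn⟩⟩
  set ω : ℝ≥0∞ := volume (ball (0 : Rn n) 1) with hω
  have hωfin : ω ≠ ∞ := measure_ball_lt_top.ne
  set K : ℝ≥0∞ := 3 * ω ^ ((1 : ℝ) / 2) * ENNReal.ofReal ((2 : ℝ) ^ (3 * n)) with hKdef
  have hKfin : K ≠ ∞ := by
    refine ENNReal.mul_ne_top (ENNReal.mul_ne_top (by norm_num) ?_) ENNReal.ofReal_ne_top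
    exact (ENNReal.rpow_lt_top_of_nonneg (by norm_num) hωfin).ne
  refine ⟨K.toReal + 1, by positivity, ?_⟩
  intro k l hkl f hf x hxl hxu
  set J : ℝ≥0∞ := ∫⁻ z in annulus (n := n) l, (‖f z‖₊ : ℝ≥0∞) with hJdef
  suffices hmain : Sbeta β ((annulus l).indicator f) x
      ≤ K * ENNReal.ofReal ((2 : ℝ) ^ (-(l * (n : ℤ)))) * J by
    refine hmain.trans ?_
    have hKC : K ≤ ENNReal.ofReal (K.toReal + 1) := by
      calc K = ENNReal.ofReal K.toReal := (ENNReal.ofReal_toReal hKfin).symm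
        _ ≤ _ := ENNReal.ofReal_le_ofReal (by linarith)
    exact mul_le_mul_left (mul_le_mul_left hKC _) _
  -- Setup: integrability of the truncated function
  have hmeasA : MeasurableSet (annulus (n := n) l) := by
    have : annulus (n := n) l = (fun z : Rn n => ‖z‖) ⁻¹' (Set.Ioc ((2:ℝ)^(l-1)) ((2:ℝ)^l)) := rfl
    rw [this]
    exact measurable_norm measurableSet_Ioc
  have hsub : annulus (n := n) l ⊆ closedBall (0 : Rn n) ((2:ℝ)^l) := by
    intro z hz
    rw [mem_closedBall, dist_zero_right]
    exact hz.2
  have hintf : IntegrableOn f (annulus (n := n) l) :=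
    (hf.integrableOn_isCompact (isCompact_closedBall (0 : Rn n) ((2:ℝ)^l))).mono_set hsub
  set g : Rn n → ℝ := (annulus l).indicator f with hgdef
  have hgint : Integrable g := hintf.integrable_indicator hmeasA
  set Ireal : ℝ := ∫ z, ‖g z‖ with hIdef
  have hInn : 0 ≤ Ireal := integral_nonneg fun z => norm_nonneg _
  have hIJ : ENNReal.ofReal Ireal = J := by
    rw [hIdef, ofReal_integral_norm_eq_lintegral_enorm hgint, hJdef]
    simp only [enorm_eq_nnnorm]
    have hpt : ∀ z, ((‖g z‖₊ : ℝ≥0∞)) =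
        (annulus l).indicator (fun z => ((‖f z‖₊ : ℝ≥0∞))) z := by
      intro z
      rw [hgdef]
      by_cases hz : z ∈ annulus (n := n) l <;>
        simp [Set.indicator_of_mem, Set.indicator_of_notMem, hz]
    rw [lintegral_congr hpt, lintegral_indicator hmeasA]
  -- the geometric scale
  set a : ℝ := (2 : ℝ) ^ ((l : ℝ) - 3) with hadef
  have ha : 0 < a := Real.rpow_pos_of_pos two_pos _
  have hxk : ‖x‖ ≤ (2 : ℝ) ^ ((k : ℝ)) := by
    rw [Real.rpow_intCast]; exact hxu
  have hk2a : (2 : ℝ) ^ ((k : ℝ)) ≤ 2 * a := by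
    have h2a : (2 : ℝ) ^ ((l : ℝ) - 2) = 2 * a := by
      rw [hadef, show (l : ℝ) - 2 = ((l : ℝ) - 3) + 1 by ring, Real.rpow_add two_pos,
        Real.rpow_one]
      ring
    rw [← h2a]
    refine Real.rpow_le_rpow_of_exponent_le one_le_two ?_
    have : (k : ℝ) + 2 ≤ (l : ℝ) := by exact_mod_cast hkl
    linarith
  have hannz : ∀ z : Rn n, z ∈ annulus (n := n) l → 4 * a < ‖z‖ := by
    intro z hz
    have h4a : (2 : ℝ) ^ ((l : ℝ) - 1) = 4 * a := by
      have h22 : (2 : ℝ) ^ (2 : ℝ) = 4 := by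
        rw [show (2 : ℝ) = ((2 : ℕ) : ℝ) by norm_num]
        rw [Real.rpow_natCast]
        norm_num
      rw [hadef, show (l : ℝ) - 1 = ((l : ℝ) - 3) + 2 by ring, Real.rpow_add two_pos, h22]
      ring
    have hz1 : (2 : ℝ) ^ (l - 1 : ℤ) < ‖z‖ := hz.1
    rw [← Real.rpow_intCast (2 : ℝ) (l - 1)] at hz1
    rw [← h4a]
    have : ((l - 1 : ℤ) : ℝ) = (l : ℝ) - 1 := by push_cast; ring
    rwa [this] at hz1
  -- geometry: for small t the convolution vanishes
  have hgeo : ∀ (y : Rn n) (t : ℝ), 0 < t → t ≤ a → dist x y < t →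
      ∀ z, g z ≠ 0 → t < ‖y - z‖ := by
    intro y t ht hta hd z hgz
    have hz : z ∈ annulus (n := n) l := by
      by_contra hzmem
      exact hgz (Set.indicator_of_notMem hzmem f)
    have h1 : 4 * a < ‖z‖ := hannz z hz
    have h2 : ‖y‖ ≤ ‖x‖ + ‖y - x‖ := by
      calc ‖y‖ = ‖x + (y - x)‖ := by congr 1; abel
        _ ≤ ‖x‖ + ‖y - x‖ := norm_add_le _ _
    have h3 : ‖y - x‖ < t := by rw [← dist_eq_norm, dist_comm]; exact hd
    have h4 : ‖z‖ - ‖y‖ ≤ ‖y - z‖ := by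
      rw [show ‖y - z‖ = ‖z - y‖ from norm_sub_rev _ _]
      exact norm_sub_norm_le _ _
    linarith
  have hA0 : ∀ (y : Rn n) (t : ℝ), 0 < t → t ≤ a → dist x y < t → Abeta β g y t = 0 := by
    intro y t ht hta hd
    refine le_antisymm ?_ zero_le
    refine iSup₂_le fun φ hφ => ?_
    rw [convDil_eq_zero hφ ht (hgeo y t ht hta hd)]
    simp
  have hAle : ∀ (y : Rn n) (t : ℝ), 0 < t →
      Abeta β g y t ≤ ENNReal.ofReal (3 * t ^ (-(n : ℝ)) * Ireal) := by
    intro y t ht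
    exact iSup₂_le fun φ hφ =>
      ENNReal.ofReal_le_ofReal (convDil_abs_le hn hβ1 hgint hφ ht y)
  -- sets and the dominating function
  set S : Set (Rn n × ℝ) := {p | 0 < p.2 ∧ dist x p.1 < p.2} with hSdef
  set T : Set (Rn n × ℝ) := {p | a < p.2 ∧ dist x p.1 < p.2} with hTdef
  have hmsnd : Measurable fun p : Rn n × ℝ => p.2 := measurable_snd
  have hmdist : Measurable fun p : Rn n × ℝ => dist x p.1 :=
    (continuous_const.dist continuous_fst).measurable
  have hSmeas : MeasurableSet S := by
    rw [hSdef, show {p : Rn n × ℝ | 0 < p.2 ∧ dist x p.1 < p.2} =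
      {p : Rn n × ℝ | 0 < p.2} ∩ {p : Rn n × ℝ | dist x p.1 < p.2} from rfl]
    exact (measurableSet_lt measurable_const hmsnd).inter (measurableSet_lt hmdist hmsnd)
  have hTmeas : MeasurableSet T := by
    rw [hTdef, show {p : Rn n × ℝ | a < p.2 ∧ dist x p.1 < p.2} =
      {p : Rn n × ℝ | a < p.2} ∩ {p : Rn n × ℝ | dist x p.1 < p.2} from rfl]
    exact (measurableSet_lt measurable_const hmsnd).inter (measurableSet_lt hmdist hmsnd)
  set c : ℝ≥0∞ := 9 * J ^ 2 with hcdef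
  set e1 : ℝ := -(3 * (n : ℝ)) - 1 with he1def
  set G : Rn n × ℝ → ℝ≥0∞ :=
    T.indicator (fun p => c * ENNReal.ofReal (p.2 ^ e1)) with hGdef
  -- pointwise bound
  have hFG : ∀ p : Rn n × ℝ,
      S.indicator (fun p => (Abeta β g p.1 p.2) ^ 2 /
        ENNReal.ofReal (p.2 ^ ((n : ℝ) + 1))) p ≤ G p := by
    intro p
    by_cases hpS : p ∈ S
    · rw [Set.indicator_of_mem hpS]
      obtain ⟨ht, hd⟩ := hpS
      by_cases hta : a < p.2
      · rw [hGdef, Set.indicator_of_mem (show p ∈ T from ⟨hta, hd⟩)]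
        have hcalc : (ENNReal.ofReal (3 * p.2 ^ (-(n : ℝ)) * Ireal)) ^ 2 /
            ENNReal.ofReal (p.2 ^ ((n : ℝ) + 1)) = c * ENNReal.ofReal (p.2 ^ e1) := by
          have hB : (0 : ℝ) ≤ 3 * p.2 ^ (-(n : ℝ)) * Ireal := by
            have := Real.rpow_nonneg ht.le (-(n : ℝ)); positivity
          have hpow : (0 : ℝ) < p.2 ^ ((n : ℝ) + 1) := Real.rpow_pos_of_pos ht _
          rw [← ENNReal.ofReal_pow hB, ← ENNReal.ofReal_div_of_pos hpow]
          have hreal : (3 * p.2 ^ (-(n : ℝ)) * Ireal) ^ 2 / p.2 ^ ((n : ℝ) + 1)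
              = 9 * Ireal ^ 2 * p.2 ^ e1 := by
            rw [div_eq_iff (ne_of_gt hpow), mul_pow, mul_pow, sq (p.2 ^ (-(n : ℝ))),
              ← Real.rpow_add ht]
            rw [mul_assoc (9 * Ireal ^ 2), ← Real.rpow_add ht]
            rw [show -(n : ℝ) + -(n : ℝ) = e1 + ((n : ℝ) + 1) by rw [he1def]; ring]
            ring
          rw [hreal, ENNReal.ofReal_mul (by positivity), ENNReal.ofReal_mul (by norm_num : (0:ℝ) ≤ 9),
            ENNReal.ofReal_pow hInn, hIJ, hcdef]
          norm_num
        rw [← hcalc]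
        gcongr
        exact hAle p.1 p.2 ht
      · rw [hA0 p.1 p.2 ht (not_lt.1 hta) hd]
        simp
    · rw [Set.indicator_of_notMem hpS]
      exact zero_le
  -- step 1 : bound the square function integral
  have hstep1 : (∫⁻ p : Rn n × ℝ in S, (Abeta β g p.1 p.2) ^ 2 /
      ENNReal.ofReal (p.2 ^ ((n : ℝ) + 1))) ≤ ∫⁻ p : Rn n × ℝ, G p := by
    rw [← lintegral_indicator hSmeas]
    exact lintegral_mono hFG
  -- step 2 : compute the integral of G by Fubini
  have hGmeas : Measurable G := by
    rw [hGdef]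
    have hm1 : Measurable fun t : ℝ => t ^ e1 := by measurability
    exact (((hm1.comp measurable_snd).ennreal_ofReal).const_mul c).indicator hTmeas
  set r : ℝ := -(2 * (n : ℝ)) - 1 with hrdef
  have hinner : ∀ t : ℝ, (∫⁻ y, G (y, t)) =
      (Ioi a).indicator (fun t => c * ω * ENNReal.ofReal (t ^ r)) t := by
    intro t
    by_cases hta : a < t
    · have ht0 : 0 < t := ha.trans hta
      have hGyt : ∀ y, G (y, t) =
          (ball x t).indicator (fun _ => c * ENNReal.ofReal (t ^ e1)) y := by
        intro y
        by_cases hy : dist x y < t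
        · rw [hGdef, Set.indicator_of_mem (show (y, t) ∈ T from ⟨hta, hy⟩),
            Set.indicator_of_mem (by rwa [mem_ball, dist_comm])]
        · rw [hGdef, Set.indicator_of_notMem (fun h => hy h.2),
            Set.indicator_of_notMem (by rwa [mem_ball, dist_comm])]
      rw [lintegral_congr hGyt, lintegral_indicator measurableSet_ball, setLIntegral_const,
        Measure.addHaar_ball _ _ ht0.le, finrank_euclideanSpace_fin,
        Set.indicator_of_mem (show t ∈ Ioi a from hta)]
      have hexp : t ^ e1 * t ^ ((n : ℕ) : ℝ) = t ^ r := by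
        rw [← Real.rpow_add ht0]
        congr 1
        rw [he1def, hrdef]; push_cast; ring
      rw [← Real.rpow_natCast t n, ← hω, ← hexp,
        ENNReal.ofReal_mul (Real.rpow_nonneg ht0.le _)]
      ring
    · have hall : ∀ y : Rn n, G (y, t) = 0 := by
        intro y
        rw [hGdef]
        exact Set.indicator_of_notMem (fun h => hta h.1) _
      rw [lintegral_congr hall, lintegral_zero,
        Set.indicator_of_notMem (by simpa using hta)]
  have hstep2 : (∫⁻ p : Rn n × ℝ, G p) =
      c * ω * ∫⁻ t in Ioi a, ENNReal.ofReal (t ^ r) := by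
    rw [MeasureTheory.Measure.volume_eq_prod, lintegral_prod_symm G hGmeas.aemeasurable]
    calc (∫⁻ t, ∫⁻ y, G (y, t)) =
        ∫⁻ t, (Ioi a).indicator (fun t => c * ω * ENNReal.ofReal (t ^ r)) t :=
          lintegral_congr hinner
      _ = ∫⁻ t in Ioi a, c * ω * ENNReal.ofReal (t ^ r) :=
          lintegral_indicator measurableSet_Ioi _
      _ = c * ω * ∫⁻ t in Ioi a, ENNReal.ofReal (t ^ r) := by
          have hm2 : Measurable fun t : ℝ => t ^ r := by measurability
          rw [lintegral_const_mul _ hm2.ennreal_ofReal]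
  -- step 3 : the one-dimensional integral
  have hr1 : r < -1 := by
    rw [hrdef]
    have : (1 : ℝ) ≤ (n : ℝ) := by exact_mod_cast hn
    linarith
  have hstep3 : (∫⁻ t in Ioi a, ENNReal.ofReal (t ^ r)) ≤
      ENNReal.ofReal (a ^ (-(2 * (n : ℝ)))) := by
    rw [← ofReal_integral_eq_lintegral_ofReal (integrableOn_Ioi_rpow_of_lt hr1 ha) ?hnn]
    case hnn =>
      filter_upwards [ae_restrict_mem measurableSet_Ioi] with t ht
      exact Real.rpow_nonneg (ha.trans ht).le _
    rw [integral_Ioi_rpow_of_lt hr1 ha]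
    apply ENNReal.ofReal_le_ofReal
    have hr2 : r + 1 = -(2 * (n : ℝ)) := by rw [hrdef]; ring
    rw [hr2]
    rw [neg_div, div_neg, neg_neg]
    have h2n : (1 : ℝ) ≤ 2 * (n : ℝ) := by
      have : (1 : ℝ) ≤ (n : ℝ) := by exact_mod_cast hn
      linarith
    exact div_le_self (Real.rpow_nonneg ha.le _) h2n
  -- assemble
  have htotal : Sbeta β g x ≤ (c * ω * ENNReal.ofReal (a ^ (-(2 * (n : ℝ))))) ^ ((1 : ℝ) / 2) := by
    rw [Sbeta]
    refine ENNReal.rpow_le_rpow ?_ (by norm_num)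
    calc (∫⁻ p : Rn n × ℝ in {p | 0 < p.2 ∧ dist x p.1 < p.2}, (Abeta β g p.1 p.2) ^ 2 /
        ENNReal.ofReal (p.2 ^ ((n : ℝ) + 1)))
        ≤ ∫⁻ p : Rn n × ℝ, G p := hstep1
      _ = c * ω * ∫⁻ t in Ioi a, ENNReal.ofReal (t ^ r) := hstep2
      _ ≤ c * ω * ENNReal.ofReal (a ^ (-(2 * (n : ℝ)))) := mul_le_mul_right hstep3 _
  -- simplify the right-hand side
  have hsq : c * ω * ENNReal.ofReal (a ^ (-(2 * (n : ℝ)))) =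
      (3 * J * ENNReal.ofReal (a ^ (-(n : ℝ)))) ^ 2 * ω := by
    have h1 : a ^ (-(2 * (n : ℝ))) = (a ^ (-(n : ℝ))) ^ 2 := by
      rw [sq, ← Real.rpow_add ha]; ring_nf
    rw [h1, ENNReal.ofReal_pow (Real.rpow_nonneg ha.le _), hcdef]
    ring
  have hhalf : ((3 * J * ENNReal.ofReal (a ^ (-(n : ℝ)))) ^ 2 * ω) ^ ((1 : ℝ) / 2) =
      3 * J * ENNReal.ofReal (a ^ (-(n : ℝ))) * ω ^ ((1 : ℝ) / 2) := by
    rw [ENNReal.mul_rpow_of_nonneg _ _ (by norm_num : (0:ℝ) ≤ 1/2)]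
    congr 1
    rw [← ENNReal.rpow_natCast (3 * J * ENNReal.ofReal (a ^ (-(n : ℝ)))) 2,
      ← ENNReal.rpow_mul]
    norm_num
  have han : a ^ (-(n : ℝ)) = (2 : ℝ) ^ (3 * n) * (2 : ℝ) ^ (-(l * (n : ℤ))) := by
    rw [hadef, ← Real.rpow_natCast (2 : ℝ) (3 * n), ← Real.rpow_intCast (2 : ℝ) (-(l * (n : ℤ))),
      ← Real.rpow_mul (by norm_num : (0:ℝ) ≤ 2), ← Real.rpow_add two_pos]
    congr 1
    push_cast
    ring
  calc Sbeta β g x ≤ (c * ω * ENNReal.ofReal (a ^ (-(2 * (n : ℝ))))) ^ ((1 : ℝ) / 2) := htotal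
    _ = 3 * J * ENNReal.ofReal (a ^ (-(n : ℝ))) * ω ^ ((1 : ℝ) / 2) := by rw [hsq, hhalf]
    _ = K * ENNReal.ofReal ((2 : ℝ) ^ (-(l * (n : ℤ)))) * J := by
        rw [han, ENNReal.ofReal_mul (by positivity), hKdef]
        ring

end
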